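/- Let S_p ≻ 0 (symmetric) and G_p, R_p be N×N real matrices, p,q ∈ {1,…,P}, with A_cl,p := A_p − B R_p G_p^{-1}. Suppose for all p, q the block matrix [[G_p + G_pᵀ − S_p, (A_p G_p − B R_p)ᵀ],[A_p G_p − B R_p, S_q]] ≻ 0. Then for all p, q: A_cl,pᵀ S_q^{-1} A_cl,p − S_p^{-1} ≺ 0, where K_p = R_p G_p^{-1}. -/

import Mathlib

open Matrix

section Aux

variable {n m : Type*} [Fintype n] [Fintype m] [DecidableEq n] [DecidableEq m]

private lemma posDef_fromBlocks_left {M : Matrix m m ℝ} {Bm : Matrix m n ℝ}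
    {C : Matrix n m ℝ} {D : Matrix n n ℝ}
    (h : (fromBlocks M Bm C D).PosDef) : M.PosDef := by
  rw [posDef_iff_dotProduct_mulVec]
  constructor
  · have h1 := h.1
    rw [IsHermitian, fromBlocks_conjTranspose] at h1
    have := congrArg Matrix.toBlocks₁₁ h1
    simpa [toBlocks_fromBlocks₁₁, IsSymm] using this
  · intro x hx
    have hv : (Sum.elim x (0 : n → ℝ)) ≠ 0 := by
      intro hcon
      apply hx
      funext i
      exact congrFun hcon (Sum.inl i)
    have := h.dotProduct_mulVec_pos hv
    simpa [fromBlocks_mulVec, dotProduct] using this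

private lemma posDef_schur₂₂ {M : Matrix m m ℝ} {Bm : Matrix m n ℝ}
    {D : Matrix n n ℝ} (hD : D.PosDef)
    (h : (fromBlocks M Bm Bmᴴ D).PosDef) : (M - Bm * D⁻¹ * Bmᴴ).PosDef := by
  have : Invertible D := hD.isUnit.invertible
  rw [posDef_iff_dotProduct_mulVec]
  constructor
  · exact (IsHermitian.fromBlocks₂₂ M Bm hD.1).mp h.1
  · intro x hx
    have hv : (Sum.elim x (-((D⁻¹ * Bmᴴ) *ᵥ x))) ≠ 0 := by
      intro hcon
      apply hx
      funext i
      exact congrFun hcon (Sum.inl i)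
    have h2 := h.dotProduct_mulVec_pos hv
    have key := schur_complement_eq₂₂ (α := ℝ) M Bm x (-((D⁻¹ * Bmᴴ) *ᵥ x)) hD.1
    rw [add_neg_cancel] at key
    simp only [star_trivial] at key
    have hzero : (0 : n → ℝ) ᵥ* D ⬝ᵥ (0 : n → ℝ) = 0 := by simp
    rw [hzero, zero_add] at key
    calc (0:ℝ) < _ := h2
    _ = Sum.elim x (-((D⁻¹ * Bmᴴ) *ᵥ x)) ᵥ*
        (fromBlocks M Bm Bmᴴ D) ⬝ᵥ Sum.elim x (-((D⁻¹ * Bmᴴ) *ᵥ x)) := by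
        rw [dotProduct_mulVec]; simp [star_trivial]
    _ = x ᵥ* (M - Bm * D⁻¹ * Bmᴴ) ⬝ᵥ x := key
    _ = dotProduct (star x) ((M - Bm * D⁻¹ * Bmᴴ) *ᵥ x) := by
        rw [dotProduct_mulVec]; simp [star_trivial]

private lemma posDef_congr {M W : Matrix n n ℝ} (hM : M.PosDef)
    (hW : IsUnit W.det) : (Wᴴ * M * W).PosDef := by
  rw [posDef_iff_dotProduct_mulVec]
  constructor
  · exact Matrix.isHermitian_conjTranspose_mul_mul W hM.1
  · intro x hx
    have hWx : W *ᵥ x ≠ 0 := by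
      intro hcon
      apply hx
      have : W⁻¹ *ᵥ (W *ᵥ x) = x := by
        rw [mulVec_mulVec, nonsing_inv_mul _ hW, one_mulVec]
      rw [hcon, mulVec_zero] at this
      exact this.symm
    have := hM.dotProduct_mulVec_pos hWx
    simpa only [star_mulVec, dotProduct_mulVec, vecMul_vecMul] using this

end Aux

theorem stmt_10 (N P : ℕ)
    (A G R S : Fin P → Matrix (Fin N) (Fin N) ℝ)
    (B : Matrix (Fin N) (Fin N) ℝ)
    (hS : ∀ p, (S p).PosDef) (hSsym : ∀ p, (S p).IsSymm)
    (hLMI : ∀ p q, (Matrix.fromBlocks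
        (G p + (G p)ᵀ - S p) (A p * G p - B * R p)ᵀ
        (A p * G p - B * R p) (S q)).PosDef) :
    ∀ p q, ((S p)⁻¹ -
        (A p - B * (R p * (G p)⁻¹))ᵀ * (S q)⁻¹ *
          (A p - B * (R p * (G p)⁻¹))).PosDef := by
  intro p q
  set C := A p * G p - B * R p with hC
  set X := G p + (G p)ᵀ - S p with hX
  have hCT : (Cᵀ)ᴴ = C := by
    rw [conjTranspose_eq_transpose_of_trivial, transpose_transpose]
  have hblock : (fromBlocks X Cᵀ (Cᵀ)ᴴ (S q)).PosDef := by
    rw [hCT]; exact hLMI p q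
  -- top-left block is posdef
  have hXpd : X.PosDef := posDef_fromBlocks_left (hLMI p q)
  -- G p is invertible
  have hGG : (G p + (G p)ᵀ).PosDef := by
    have := hXpd.add_posSemidef (hS p).posSemidef
    simpa [hX, sub_add_cancel] using this
  have hGdet : IsUnit (G p).det := by
    by_contra hcon
    have hdet0 : (G p).det = 0 := by
      simpa [isUnit_iff_ne_zero] using hcon
    obtain ⟨v, hv, hGv⟩ := (Matrix.exists_mulVec_eq_zero_iff).mpr hdet0
    have hpos := hGG.dotProduct_mulVec_pos hv
    rw [add_mulVec, dotProduct_add, hGv, dotProduct_zero] at hpos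
    have hzero2 : star v ⬝ᵥ (G p)ᵀ *ᵥ v = 0 := by
      rw [star_trivial, mulVec_transpose, dotProduct_comm, ← dotProduct_mulVec, hGv,
        dotProduct_zero]
    rw [hzero2] at hpos
    simp at hpos
  -- Schur complement
  have hSchur : (X - Cᵀ * (S q)⁻¹ * (Cᵀ)ᴴ).PosDef := posDef_schur₂₂ (hS q) hblock
  rw [hCT] at hSchur
  -- the key algebraic identity
  have hSpInv : IsUnit (S p).det := isUnit_iff_ne_zero.mpr (hS p).det_pos.ne'
  have hSymm : (S p)ᵀ = S p := (hSsym p)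
  have hkey : (G p)ᵀ * (S p)⁻¹ * (G p) - X
      = (G p - S p)ᵀ * (S p)⁻¹ * (G p - S p) := by
    have h1 : (S p)ᵀ * (S p)⁻¹ = 1 := by
      rw [hSymm, mul_nonsing_inv _ hSpInv]
    have h2 : (S p)⁻¹ * (S p) = 1 := nonsing_inv_mul _ hSpInv
    rw [transpose_sub, sub_mul, sub_mul, mul_sub, mul_sub, hX]
    rw [Matrix.mul_assoc (S p)ᵀ, Matrix.mul_assoc (S p)ᵀ, h2, Matrix.mul_one,
      ← Matrix.mul_assoc (S p)ᵀ, h1, Matrix.one_mul]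
    rw [Matrix.mul_assoc ((G p)ᵀ) _ (S p), h2, Matrix.mul_one, hSymm]
    abel
  -- N := Gᵀ Sp⁻¹ G - Cᵀ Sq⁻¹ C is posdef
  have hPSD : ((G p - S p)ᵀ * (S p)⁻¹ * (G p - S p)).PosSemidef := by
    have := ((hS p).inv.posSemidef).conjTranspose_mul_mul_same (G p - S p)
    simpa [conjTranspose_eq_transpose_of_trivial] using this
  have hN : ((G p)ᵀ * (S p)⁻¹ * (G p) - Cᵀ * (S q)⁻¹ * C).PosDef := by
    have := hSchur.add_posSemidef hPSD
    rw [← hkey] at this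
    convert this using 1
    abel
  -- congruence with G⁻¹
  have hGinvdet : IsUnit ((G p)⁻¹).det := (isUnit_nonsing_inv_det_iff).mpr hGdet
  have hfinal := posDef_congr hN hGinvdet
  rw [conjTranspose_eq_transpose_of_trivial] at hfinal
  have hCG : C * (G p)⁻¹ = A p - B * (R p * (G p)⁻¹) := by
    rw [hC, Matrix.sub_mul, Matrix.mul_assoc (A p), mul_nonsing_inv _ hGdet,
      Matrix.mul_one, Matrix.mul_assoc]
  have hEq : ((G p)⁻¹)ᵀ * ((G p)ᵀ * (S p)⁻¹ * G p - Cᵀ * (S q)⁻¹ * C) * (G p)⁻¹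
      = (S p)⁻¹ -
        (A p - B * (R p * (G p)⁻¹))ᵀ * (S q)⁻¹ * (A p - B * (R p * (G p)⁻¹)) := by
    rw [← hCG, Matrix.mul_sub, Matrix.sub_mul]
    congr 1
    · rw [transpose_nonsing_inv]
      calc ((G p)ᵀ)⁻¹ * ((G p)ᵀ * (S p)⁻¹ * G p) * (G p)⁻¹
          = ((G p)ᵀ)⁻¹ * (G p)ᵀ * (S p)⁻¹ * (G p * (G p)⁻¹) := by
            simp only [Matrix.mul_assoc]
      _ = (S p)⁻¹ := by
            rw [nonsing_inv_mul _ (by rwa [det_transpose]), mul_nonsing_inv _ hGdet,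
              Matrix.one_mul, Matrix.mul_one]
    · rw [transpose_mul, transpose_nonsing_inv]
      simp only [Matrix.mul_assoc]
  rw [← hEq]
  exact hfinal
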